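/- Let H be a connected finite simple graph of diameter D(H) ≥ 6 and let k be an integer with 1 ≤ k ≤ C(K_1 + H). Then adim_k(K_1 + H) = adim_k(H). -/

import Mathlib

open Finset

namespace AdjDim

noncomputable section
open Classical

variable {V W : Type*}

/-- Truncated distance `d_{G,2}(x,y) = min(d_G(x,y), 2)`:
`0` if `x = y`, `1` if `x` and `y` are adjacent, and `2` otherwise. -/
def d2 (G : SimpleGraph V) (x y : V) : ℕ :=
  if x = y then 0 else if G.Adj x y then 1 else 2

/-- `S` is a `k`-adjacency generator for `G`: every pair of distinct vertices is
distinguished (w.r.t. `d_{G,2}`) by at least `k` vertices of `S`. -/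
def IsKAdjGen (G : SimpleGraph V) [Fintype V] (k : ℕ) (S : Finset V) : Prop :=
  ∀ x y : V, x ≠ y → k ≤ (S.filter (fun w => d2 G x w ≠ d2 G y w)).card

/-- The `k`-adjacency dimension of `G`: the minimum cardinality of a
`k`-adjacency generator. -/
def adim (G : SimpleGraph V) [Fintype V] (k : ℕ) : ℕ :=
  sInf {n | ∃ S : Finset V, IsKAdjGen G k S ∧ S.card = n}

/-- `B` is a `k`-adjacency basis of `G`: a `k`-adjacency generator of minimum
cardinality. -/
def IsKAdjBasis (G : SimpleGraph V) [Fintype V] (k : ℕ) (B : Finset V) : Prop :=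
  IsKAdjGen G k B ∧ B.card = adim G k

/-- `G` is `k`-adjacency dimensional: `k` is the largest integer for which a
`k`-adjacency generator exists. -/
def IsKAdjDimensional (G : SimpleGraph V) [Fintype V] (k : ℕ) : Prop :=
  (∃ S : Finset V, IsKAdjGen G k S) ∧
    ∀ k' : ℕ, k < k' → ¬ ∃ S : Finset V, IsKAdjGen G k' S

/-- `C_G(x,y)`: the set of vertices distinguishing `x` and `y` w.r.t. `d_{G,2}`. -/
def CSet (G : SimpleGraph V) [Fintype V] (x y : V) : Finset V :=
  univ.filter (fun z => d2 G x z ≠ d2 G y z)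

/-- `C(G) = min_{x ≠ y} |C_G(x,y)|`. -/
def Cmin (G : SimpleGraph V) [Fintype V] : ℕ :=
  sInf {m | ∃ x y : V, x ≠ y ∧ (CSet G x y).card = m}

/-- `C_k(G)`: the union of the sets `C_G(x,y)` over pairs of distinct vertices
with `|C_G(x,y)| = k`. -/
def Ck (G : SimpleGraph V) [Fintype V] (k : ℕ) : Finset V :=
  univ.filter (fun z => ∃ x y : V, x ≠ y ∧ (CSet G x y).card = k ∧ z ∈ CSet G x y)

/-- Two distinct vertices `x, y` are twins: every other vertex is at the same
truncated distance from both. -/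
def Twins (G : SimpleGraph V) (x y : V) : Prop :=
  x ≠ y ∧ ∀ z : V, z ≠ x → z ≠ y → d2 G x z = d2 G y z

/-- The join `G + H` of two vertex-disjoint graphs. -/
def join (G : SimpleGraph V) (H : SimpleGraph W) : SimpleGraph (V ⊕ W) where
  Adj x y :=
    match x, y with
    | Sum.inl a, Sum.inl b => G.Adj a b
    | Sum.inr a, Sum.inr b => H.Adj a b
    | Sum.inl _, Sum.inr _ => True
    | Sum.inr _, Sum.inl _ => True
  symm := ⟨by
    rintro (a | a) (b | b) h
    · exact G.adj_symm h
    · trivial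
    · trivial
    · exact H.adj_symm h⟩
  loopless := ⟨by
    rintro (a | a) h
    · exact G.irrefl h
    · exact H.irrefl h⟩

/-- `K_1 + H`: the join of a one-vertex graph with `H`, i.e. `H` together with a
new universal vertex. -/
def K1join (H : SimpleGraph W) : SimpleGraph (Unit ⊕ W) :=
  join (⊥ : SimpleGraph Unit) H


section Aux

@[simp] lemma d2_inr_inr (H : SimpleGraph W) (x w : W) :
    d2 (K1join H) (Sum.inr x) (Sum.inr w) = d2 H x w := by
  unfold d2
  have hadj : (K1join H).Adj (Sum.inr x) (Sum.inr w) ↔ H.Adj x w := Iff.rfl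
  by_cases h : x = w
  · simp [h]
  · have h' : (Sum.inr x : Unit ⊕ W) ≠ Sum.inr w := by simp [h]
    simp only [if_neg h, if_neg h']
    by_cases ha : H.Adj x w
    · rw [if_pos (hadj.mpr ha), if_pos ha]
    · rw [if_neg (fun hc => ha (hadj.mp hc)), if_neg ha]

@[simp] lemma d2_inl_inr (H : SimpleGraph W) (a : Unit) (w : W) :
    d2 (K1join H) (Sum.inl a) (Sum.inr w) = 1 := by
  unfold d2
  have h1 : (Sum.inl a : Unit ⊕ W) ≠ Sum.inr w := by simp
  have h2 : (K1join H).Adj (Sum.inl a) (Sum.inr w) := trivial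
  rw [if_neg h1, if_pos h2]

@[simp] lemma d2_inr_inl (H : SimpleGraph W) (a : Unit) (w : W) :
    d2 (K1join H) (Sum.inr w) (Sum.inl a) = 1 := by
  unfold d2
  have h1 : (Sum.inr w : Unit ⊕ W) ≠ Sum.inl a := by simp
  have h2 : (K1join H).Adj (Sum.inr w) (Sum.inl a) := trivial
  rw [if_neg h1, if_pos h2]

@[simp] lemma d2_inl_inl (H : SimpleGraph W) (a b : Unit) :
    d2 (K1join H) (Sum.inl a) (Sum.inl b) = 0 := by
  unfold d2
  have : (Sum.inl a : Unit ⊕ W) = Sum.inl b := by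
    cases a; cases b; rfl
  rw [if_pos this]

/-- Restriction: a `k`-adjacency generator of `K₁ + H` yields one of `H` of
no greater cardinality. -/
lemma restrict_gen [Fintype W] (H : SimpleGraph W) (k : ℕ) (S : Finset (Unit ⊕ W))
    (hS : IsKAdjGen (K1join H) k S) :
    ∃ T : Finset W, IsKAdjGen H k T ∧ T.card ≤ S.card := by
  classical
  refine ⟨univ.filter (fun w => Sum.inr w ∈ S), ?_, ?_⟩
  · intro x y hxy
    have hxy' : (Sum.inr x : Unit ⊕ W) ≠ Sum.inr y := by simp [hxy]
    have h := hS (Sum.inr x) (Sum.inr y) hxy'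
    have hsub : S.filter (fun w => d2 (K1join H) (Sum.inr x) w ≠ d2 (K1join H) (Sum.inr y) w)
        ⊆ ((univ.filter (fun w => Sum.inr w ∈ S)).filter
            (fun w => d2 H x w ≠ d2 H y w)).image Sum.inr := by
      intro z hz
      rcases Finset.mem_filter.mp hz with ⟨hzS, hzd⟩
      match z with
      | Sum.inl a => simp at hzd
      | Sum.inr w =>
        refine Finset.mem_image.mpr ⟨w, ?_, rfl⟩
        refine Finset.mem_filter.mpr ⟨Finset.mem_filter.mpr ⟨Finset.mem_univ _, hzS⟩, ?_⟩
        simpa using hzd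
    calc k ≤ _ := h
      _ ≤ _ := Finset.card_le_card hsub
      _ = _ := Finset.card_image_of_injective _ Sum.inr_injective
  · exact Finset.card_le_card_of_injOn (fun w => Sum.inr w)
      (fun w hw => (Finset.mem_filter.mp hw).2)
      (fun _ _ _ _ h => Sum.inr_injective h)

/-- Construction: if `B` is a `k`-adjacency generator of `H` and every vertex of
`H` has at least `k` non-neighbours in `B`, then `inr '' B` is a `k`-adjacency
generator of `K₁ + H`. -/
lemma construct_gen [Fintype W] (H : SimpleGraph W) (k : ℕ) (B : Finset W)
    (hB : IsKAdjGen H k B)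
    (hnb : ∀ v : W, k ≤ (B.filter (fun w => ¬ H.Adj v w)).card) :
    IsKAdjGen (K1join H) k (B.image Sum.inr) := by
  classical
  have key : ∀ y : W,
      k ≤ ((B.image Sum.inr).filter (fun w =>
        d2 (K1join H) (Sum.inl ()) w ≠ d2 (K1join H) (Sum.inr y) w)).card := by
    intro y
    have hsub : (B.filter (fun w => ¬ H.Adj y w)).image Sum.inr ⊆
        (B.image Sum.inr).filter (fun w =>
          d2 (K1join H) (Sum.inl ()) w ≠ d2 (K1join H) (Sum.inr y) w) := by
      intro z hz
      rcases Finset.mem_image.mp hz with ⟨w, hw, rfl⟩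
      rcases Finset.mem_filter.mp hw with ⟨hwB, hwadj⟩
      refine Finset.mem_filter.mpr ⟨Finset.mem_image_of_mem _ hwB, ?_⟩
      rw [d2_inl_inr, d2_inr_inr]
      unfold d2
      by_cases h : y = w
      · simp [h]
      · rw [if_neg h, if_neg hwadj]; omega
    calc k ≤ _ := hnb y
      _ = ((B.filter (fun w => ¬ H.Adj y w)).image Sum.inr).card :=
        (Finset.card_image_of_injective _ Sum.inr_injective).symm
      _ ≤ _ := Finset.card_le_card hsub
  rintro (a | x) (b | y) hxy
  · exact absurd (by cases a; cases b; rfl) hxy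
  · cases a; exact key y
  · cases b
    have h := key x
    have : ((B.image Sum.inr).filter (fun w =>
        d2 (K1join H) (Sum.inl ()) w ≠ d2 (K1join H) (Sum.inr x) w)) =
        ((B.image Sum.inr).filter (fun w =>
        d2 (K1join H) (Sum.inr x) w ≠ d2 (K1join H) (Sum.inl ()) w)) := by
      apply Finset.filter_congr
      intro z _
      constructor <;> exact fun h1 => Ne.symm h1
    rw [this] at h
    exact h
  · have hxy' : x ≠ y := fun h => hxy (by rw [h])
    have h := hB x y hxy'
    have hsub : (B.filter (fun w => d2 H x w ≠ d2 H y w)).image Sum.inr ⊆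
        (B.image Sum.inr).filter (fun w =>
          d2 (K1join H) (Sum.inr x) w ≠ d2 (K1join H) (Sum.inr y) w) := by
      intro z hz
      rcases Finset.mem_image.mp hz with ⟨w, hw, rfl⟩
      rcases Finset.mem_filter.mp hw with ⟨hwB, hwd⟩
      exact Finset.mem_filter.mpr ⟨Finset.mem_image_of_mem _ hwB, by simpa using hwd⟩
    calc k ≤ _ := h
      _ = ((B.filter (fun w => d2 H x w ≠ d2 H y w)).image Sum.inr).card :=
        (Finset.card_image_of_injective _ Sum.inr_injective).symm
      _ ≤ _ := Finset.card_le_card hsub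

/-- Discrete intermediate value theorem for `ℕ`-valued functions with steps `≤ 1`. -/
lemma nat_ivt (f : ℕ → ℕ) (hstep : ∀ i, f (i + 1) ≤ f i + 1) (h0 : f 0 = 0)
    (m n : ℕ) (h : n ≤ f m) : ∃ i, f i = n := by
  induction m with
  | zero => exact ⟨0, by omega⟩
  | succ m ih =>
    by_cases h' : n ≤ f m
    · exact ih h'
    · exact ⟨m + 1, by have := hstep m; omega⟩

/-- In a connected graph, any value up to `dist v b` is attained as a distance from `v`. -/
lemma exists_dist_eq {W : Type*} {H : SimpleGraph W} (hconn : H.Connected)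
    (v b : W) (n : ℕ) (h : n ≤ H.dist v b) : ∃ y : W, H.dist v y = n := by
  obtain ⟨p, hp⟩ := hconn.exists_walk_length_eq_dist v b
  have hstep : ∀ i, H.dist v (p.getVert (i + 1)) ≤ H.dist v (p.getVert i) + 1 := by
    intro i
    by_cases hi : i < p.length
    · have hadj := p.adj_getVert_succ hi
      have h1 : H.dist (p.getVert i) (p.getVert (i + 1)) = 1 :=
        SimpleGraph.dist_eq_one_iff_adj.mpr hadj
      have := hconn.dist_triangle (u := v) (v := p.getVert i) (w := p.getVert (i + 1))
      omega
    · have h1 : p.getVert (i + 1) = b := p.getVert_of_length_le (by omega)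
      have h2 : p.getVert i = b := p.getVert_of_length_le (by omega)
      rw [h1, h2]; omega
  have h0 : H.dist v (p.getVert 0) = 0 := by
    rw [p.getVert_zero]; exact SimpleGraph.dist_self
  have hm : n ≤ H.dist v (p.getVert p.length) := by
    rwa [p.getVert_length]
  obtain ⟨i, hi⟩ := nat_ivt (fun i => H.dist v (p.getVert i)) hstep h0 p.length n hm
  exact ⟨p.getVert i, hi⟩

/-- If `diam H ≥ 6`, every vertex has two distinct vertices at distance `≥ 3`. -/
lemma exists_two_far [Fintype W] {H : SimpleGraph W} (hconn : H.Connected)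
    (hdiam : 6 ≤ H.diam) (v : W) :
    ∃ x y : W, x ≠ y ∧ 3 ≤ H.dist v x ∧ 3 ≤ H.dist v y := by
  have hne : Nonempty W := hconn.nonempty
  obtain ⟨a, b, hab⟩ := SimpleGraph.exists_dist_eq_diam (G := H)
  have hab6 : 6 ≤ H.dist a b := by omega
  have htri : H.dist a b ≤ H.dist a v + H.dist v b := hconn.dist_triangle
  have hca : H.dist a v = H.dist v a := SimpleGraph.dist_comm
  have hcb : H.dist b v = H.dist v b := SimpleGraph.dist_comm
  by_cases h1 : 3 ≤ H.dist v a
  · by_cases h2 : 3 ≤ H.dist v b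
    · refine ⟨a, b, ?_, h1, h2⟩
      intro hEq
      rw [hEq] at hab6
      rw [SimpleGraph.dist_self (v := b)] at hab6
      omega
    · have h4 : 4 ≤ H.dist v a := by omega
      obtain ⟨y, hy⟩ := exists_dist_eq hconn v a 3 (by omega)
      exact ⟨a, y, fun hEq => by rw [← hEq] at hy; omega, h1, by omega⟩
  · have h4 : 4 ≤ H.dist v b := by omega
    obtain ⟨y, hy⟩ := exists_dist_eq hconn v b 3 (by omega)
    exact ⟨b, y, fun hEq => by rw [← hEq] at hy; omega, by omega, by omega⟩

/-- If `diam H ≥ 6`, then every `k`-adjacency generator `B` of `H` contains at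
least `k` non-neighbours of each vertex. -/
lemma nonadj_card [Fintype W] {H : SimpleGraph W} (hconn : H.Connected)
    (hdiam : 6 ≤ H.diam) (k : ℕ) (B : Finset W) (hB : IsKAdjGen H k B) (v : W) :
    k ≤ (B.filter (fun w => ¬ H.Adj v w)).card := by
  classical
  obtain ⟨x, y, hxy, hx3, hy3⟩ := exists_two_far hconn hdiam v
  have h := hB x y hxy
  have hsub : B.filter (fun w => d2 H x w ≠ d2 H y w) ⊆
      B.filter (fun w => ¬ H.Adj v w) := by
    intro w hw
    rcases Finset.mem_filter.mp hw with ⟨hwB, hwd⟩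
    refine Finset.mem_filter.mpr ⟨hwB, ?_⟩
    intro hadj
    have hvw : H.dist v w = 1 := SimpleGraph.dist_eq_one_iff_adj.mpr hadj
    have hcases : w = x ∨ H.Adj x w ∨ w = y ∨ H.Adj y w := by
      by_contra hc
      push_neg at hc
      obtain ⟨hc1, hc2, hc3, hc4⟩ := hc
      apply hwd
      unfold d2
      rw [if_neg (fun hh => hc1 hh.symm), if_neg hc2,
        if_neg (fun hh => hc3 hh.symm), if_neg hc4]
    have hclose : H.dist v x ≤ 2 ∨ H.dist v y ≤ 2 := by
      rcases hcases with rfl | hadjx | rfl | hadjy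
      · left
        have := hconn.dist_triangle (u := v) (v := w) (w := w)
        omega
      · left
        have h1 : H.dist w x = 1 := SimpleGraph.dist_eq_one_iff_adj.mpr hadjx.symm
        have := hconn.dist_triangle (u := v) (v := w) (w := x)
        omega
      · right
        omega
      · right
        have h1 : H.dist w y = 1 := SimpleGraph.dist_eq_one_iff_adj.mpr hadjy.symm
        have := hconn.dist_triangle (u := v) (v := w) (w := y)
        omega
    omega
  calc k ≤ _ := h
    _ ≤ _ := Finset.card_le_card hsub

end Aux

/-- Corollary 4.4: for a connected graph `H` of diameter at least `6` and
`1 ≤ k ≤ C(K₁ + H)`, `adim_k(K₁ + H) = adim_k(H)`. -/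
theorem adim_K1join_eq_of_diam [Fintype W] (H : SimpleGraph W)
    (hconn : H.Connected) (hdiam : 6 ≤ H.diam) (k : ℕ)
    (hk1 : 1 ≤ k) (hk2 : k ≤ Cmin (K1join H)) :
    adim (K1join H) k = adim H k := by
  classical
  by_cases hH : ∃ S : Finset W, IsKAdjGen H k S
  · -- H has a k-adjacency generator; take a basis
    have hAne : {n | ∃ S : Finset W, IsKAdjGen H k S ∧ S.card = n}.Nonempty := by
      obtain ⟨S, hS⟩ := hH
      exact ⟨S.card, S, hS, rfl⟩
    have hmem := Nat.sInf_mem hAne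
    obtain ⟨B, hBgen, hBcard⟩ := hmem
    have hnb := nonadj_card hconn hdiam k B hBgen
    have hJgen : IsKAdjGen (K1join H) k (B.image (Sum.inr : W → Unit ⊕ W)) :=
      construct_gen H k B hBgen hnb
    have hJcard : (B.image (Sum.inr : W → Unit ⊕ W)).card = B.card :=
      Finset.card_image_of_injective _ Sum.inr_injective
    have hle1 : adim (K1join H) k ≤ adim H k := by
      calc adim (K1join H) k ≤ (B.image (Sum.inr : W → Unit ⊕ W)).card :=
            Nat.sInf_le ⟨B.image (Sum.inr : W → Unit ⊕ W), hJgen, rfl⟩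
        _ = B.card := hJcard
        _ = adim H k := hBcard
    have hAJne : {n | ∃ S : Finset (Unit ⊕ W),
        IsKAdjGen (K1join H) k S ∧ S.card = n}.Nonempty :=
      ⟨(B.image (Sum.inr : W → Unit ⊕ W)).card, B.image (Sum.inr : W → Unit ⊕ W), hJgen, rfl⟩
    have hmemJ := Nat.sInf_mem hAJne
    obtain ⟨S0, hS0gen, hS0card⟩ := hmemJ
    obtain ⟨T, hTgen, hTcard⟩ := restrict_gen H k S0 hS0gen
    have hle2 : adim H k ≤ adim (K1join H) k := by
      calc adim H k ≤ T.card := Nat.sInf_le ⟨T, hTgen, rfl⟩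
        _ ≤ S0.card := hTcard
        _ = adim (K1join H) k := hS0card
    exact le_antisymm hle1 hle2
  · -- no k-adjacency generator for H, hence none for the join either
    have hA : {n | ∃ S : Finset W, IsKAdjGen H k S ∧ S.card = n} = ∅ := by
      ext n
      simp only [Set.mem_setOf_eq, Set.mem_empty_iff_false, iff_false]
      rintro ⟨S, hS, -⟩
      exact hH ⟨S, hS⟩
    have hAJ : {n | ∃ S : Finset (Unit ⊕ W),
        IsKAdjGen (K1join H) k S ∧ S.card = n} = ∅ := by
      ext n
      simp only [Set.mem_setOf_eq, Set.mem_empty_iff_false, iff_false]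
      rintro ⟨S, hS, -⟩
      obtain ⟨T, hTgen, -⟩ := restrict_gen H k S hS
      exact hH ⟨T, hTgen⟩
    unfold adim
    rw [hA, hAJ, Nat.sInf_empty]

end
end AdjDim
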